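/- Let σ₁ ≥ σ_m > 0, δ ≥ 0, and ε > 0 be real numbers satisfying δ + σ₁² − σ_m² < (√5 − 1)/2, and let λ satisfy σ_m² + (σ_m²/σ₁²)ε ≤ λ ≤ σ_m² + ε. Then 0 ≤ φ(δ + σ₁² − λσ₁²/(σ₁² + ε)) < 1, where φ = (√5 + 1)/2 is the golden ratio. -/
import Mathlib


/-- Arithmetic fact for the NDRT contraction factor: if `σ₁ ≥ σ_m > 0`, `δ ≥ 0`, `ε > 0`,
`δ + σ₁² - σ_m² < (√5 - 1)/2`, and `σ_m² + (σ_m²/σ₁²)ε ≤ λ ≤ σ_m² + ε`, then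
`0 ≤ φ(δ + σ₁² - λσ₁²/(σ₁² + ε)) < 1`, where `φ = (√5 + 1)/2`. -/
theorem stmt11 (σ1 σm δ ε lam : ℝ) (h1 : σm ≤ σ1) (h2 : 0 < σm) (hδ : 0 ≤ δ)
    (hε : 0 < ε)
    (hcond : δ + σ1 ^ 2 - σm ^ 2 < (Real.sqrt 5 - 1) / 2)
    (hlam1 : σm ^ 2 + σm ^ 2 / σ1 ^ 2 * ε ≤ lam) (hlam2 : lam ≤ σm ^ 2 + ε) :
    0 ≤ (Real.sqrt 5 + 1) / 2 * (δ + σ1 ^ 2 - lam * σ1 ^ 2 / (σ1 ^ 2 + ε)) ∧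
      (Real.sqrt 5 + 1) / 2 * (δ + σ1 ^ 2 - lam * σ1 ^ 2 / (σ1 ^ 2 + ε)) < 1 := by
  have hσ1 : 0 < σ1 := lt_of_lt_of_le h2 h1
  have hσ1sq : 0 < σ1 ^ 2 := by positivity
  have hden : 0 < σ1 ^ 2 + ε := by positivity
  have hsq : σm ^ 2 ≤ σ1 ^ 2 := by nlinarith
  have hφ : 0 < Real.sqrt 5 + 1 := by positivity
  -- lower bound: lam * σ1^2 / (σ1^2+ε) ≤ σ1^2
  have hlow : lam * σ1 ^ 2 / (σ1 ^ 2 + ε) ≤ σ1 ^ 2 := by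
    rw [div_le_iff₀ hden]
    nlinarith
  have hnn : 0 ≤ δ + σ1 ^ 2 - lam * σ1 ^ 2 / (σ1 ^ 2 + ε) := by linarith
  constructor
  · positivity
  -- upper bound: σm^2 ≤ lam * σ1^2 / (σ1^2+ε)
  have hup : σm ^ 2 ≤ lam * σ1 ^ 2 / (σ1 ^ 2 + ε) := by
    rw [le_div_iff₀ hden]
    have : σm ^ 2 / σ1 ^ 2 * ε * σ1 ^ 2 = σm ^ 2 * ε := by
      field_simp
    nlinarith
  have ht : δ + σ1 ^ 2 - lam * σ1 ^ 2 / (σ1 ^ 2 + ε) < (Real.sqrt 5 - 1) / 2 := by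
    linarith
  have h5 : Real.sqrt 5 ^ 2 = 5 := Real.sq_sqrt (by norm_num)
  have hkey : (Real.sqrt 5 + 1) / 2 * ((Real.sqrt 5 - 1) / 2) = 1 := by
    nlinarith
  calc (Real.sqrt 5 + 1) / 2 * (δ + σ1 ^ 2 - lam * σ1 ^ 2 / (σ1 ^ 2 + ε))
      < (Real.sqrt 5 + 1) / 2 * ((Real.sqrt 5 - 1) / 2) := by
        apply mul_lt_mul_of_pos_left ht (by positivity)
    _ = 1 := hkey
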